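/- Suppose φ''_F > 0 > φ''_{2F} and φ''_F + 8φ''_{2F} > 0. Let u^a solve the linearized atomistic equations and u^{qcf} ∈ R^{2N+1} solve L^{qcf} u^{qcf} = f with boundary conditions u^{qcf}_{±N} = u^a_{±N}. Then ‖D(u^a − u^{qcf})‖_{ℓ^∞} ≤ 4 ε^2 |φ''_{2F}| ‖D^3 u^a‖_{ℓ^∞(C̃)} / (φ''_F + 8φ''_{2F}). -/

import Mathlib

noncomputable def eps (N : ℤ) : ℝ := 1 / (N : ℝ)

noncomputable def Dd (N : ℤ) (v : ℤ → ℝ) (j : ℤ) : ℝ := (v j - v (j-1)) / eps N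

noncomputable def D3 (N : ℤ) (v : ℤ → ℝ) (j : ℤ) : ℝ :=
  (Dd N v j - 2 * Dd N v (j-1) + Dd N v (j-2)) / (eps N)^2

noncomputable def Laop (N : ℤ) (φF φ2F : ℝ) (v : ℤ → ℝ) (j : ℤ) : ℝ :=
  φF * ((-v (j+1) + 2 * v j - v (j-1)) / (eps N)^2) +
  φ2F * ((-v (j+2) + 2 * v j - v (j-2)) / (eps N)^2)

noncomputable def LqcfOp (N K : ℤ) (φF φ2F : ℝ) (v : ℤ → ℝ) (j : ℤ) : ℝ :=
  if -K ≤ j ∧ j ≤ K then Laop N φF φ2F v j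
  else (φF + 4 * φ2F) * ((-v (j+1) + 2 * v j - v (j-1)) / (eps N)^2)

lemma qcfAux_insert (m n : ℤ) (h : m ≤ n + 1) :
    Finset.Icc m (n+1) = insert (n+1) (Finset.Icc m n) := by
  ext x; simp only [Finset.mem_Icc, Finset.mem_insert]; omega

lemma qcfAux_tele (g : ℤ → ℝ) (m : ℤ) :
    ∀ n, m ≤ n → (∑ j ∈ Finset.Icc (m+1) n, (g j - g (j-1))) = g n - g m := by
  refine Int.le_induction ?_ ?_
  · rw [show Finset.Icc (m+1) m = ∅ from Finset.Icc_eq_empty (by omega), Finset.sum_empty]; ring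
  · intro n hmn ih
    rw [qcfAux_insert (m+1) n (by omega),
      Finset.sum_insert (by simp only [Finset.mem_Icc]; omega), ih]
    rw [show n + 1 - 1 = n by ring]; ring

lemma qcfAux_const (P : ℤ → ℝ) (m : ℤ) :
    ∀ n, m ≤ n → (∀ j, m ≤ j → j + 1 ≤ n → P j = P (j+1)) → P n = P m := by
  refine Int.le_induction ?_ ?_
  · intro _; rfl
  · intro n hmn ih hstep
    rw [← hstep n hmn le_rfl]
    exact ih (fun j hj hj' => hstep j hj (by omega))

lemma qcfAux_flux (N : ℤ) (hN : eps N ≠ 0) (φF φ2F c a : ℝ) (hc : c = φF + 4*φ2F) (ha : a = -φ2F)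
    (v : ℤ → ℝ) (j : ℤ) (h : Laop N φF φ2F v j = 0) :
    c * Dd N v j - a * (Dd N v (j+1) - 2*Dd N v j + Dd N v (j-1))
      = c * Dd N v (j+1) - a * (Dd N v (j+1+1) - 2*Dd N v (j+1) + Dd N v (j+1-1)) := by
  subst hc ha
  unfold Laop at h
  unfold Dd
  rw [show j+1+1 = j+2 by ring, show j+2-1 = j+1 by ring, show j+1-1 = j by ring,
    show j-1-1 = j-2 by ring]
  field_simp at h ⊢
  linear_combination h

lemma qcfAux_outer (N : ℤ) (hN : eps N ≠ 0) (φF φ2F c : ℝ) (hc : c = φF + 4*φ2F) (ua uq e : ℤ → ℝ)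
    (he : ∀ i, e i = ua i - uq i) (j : ℤ)
    (h : Laop N φF φ2F ua j = c * ((-uq (j+1) + 2 * uq j - uq (j-1)) / (eps N)^2)) :
    c * Dd N e j - (-φ2F * (eps N)^2 * D3 N ua (j+1))
      = c * Dd N e (j+1) - (-φ2F * (eps N)^2 * D3 N ua (j+1+1)) := by
  subst hc
  unfold Laop at h
  unfold D3
  unfold Dd
  simp only [he]
  rw [show j+1+1 = j+2 by ring, show j+2-1 = j+1 by ring, show j+2-2 = j by ring,
      show j+1-1 = j by ring, show j+1-2 = j-1 by ring, show j-1-1 = j-2 by ring]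
  field_simp at h ⊢
  linear_combination h

set_option maxHeartbeats 2000000 in
/-- Error estimate for the force-based QC approximation: if `φ''_F > 0 > φ''_{2F}`
and `φ''_F + 8φ''_{2F} > 0`, and `u^a`, `u^{qcf}` solve the atomistic resp. QCF
equations with matching boundary values, then
`‖D(u^a - u^{qcf})‖_{ℓ∞} ≤ 4 ε² |φ''_{2F}| ‖D³u^a‖_{ℓ∞(C̃)} / (φ''_F + 8φ''_{2F})`. -/
theorem qcf_error_estimate (N K : ℤ) (hN : 1 ≤ N) (hK : 2 ≤ K) (hKN : 2 * K ≤ N)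
    (φF φ2F : ℝ) (hF : 0 < φF) (h2F : φ2F < 0) (hstab : 0 < φF + 8 * φ2F)
    (hneCt : ((Finset.Icc (-N+2) (-K+1)) ∪ (Finset.Icc (K+2) (N+1))).Nonempty)
    (f ua uq : ℤ → ℝ)
    (hua : ∀ j ∈ Finset.Icc (-N+1) (N-1), Laop N φF φ2F ua j = f j)
    (huq : ∀ j ∈ Finset.Icc (-N+1) (N-1), LqcfOp N K φF φ2F uq j = f j)
    (hbcL : uq (-N) = ua (-N)) (hbcR : uq N = ua N) :
    ∀ j ∈ Finset.Icc (-N+1) N,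
      |Dd N (fun i => ua i - uq i) j| ≤
        4 * (eps N)^2 * |φ2F| *
          (((Finset.Icc (-N+2) (-K+1)) ∪ (Finset.Icc (K+2) (N+1))).sup' hneCt
            (fun i => |D3 N ua i|)) / (φF + 8 * φ2F) := by
  have hNR : (0:ℝ) < (N:ℝ) := by exact_mod_cast (by omega : (0:ℤ) < N)
  have heps : 0 < eps N := by unfold eps; positivity
  have hepsne : eps N ≠ 0 := ne_of_gt heps
  set e : ℤ → ℝ := fun i => ua i - uq i with hedef
  have he : ∀ i, e i = ua i - uq i := fun i => rfl
  clear_value e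
  set c : ℝ := φF + 4*φ2F with hcdef
  set a : ℝ := -φ2F with hadef
  have ha : 0 < a := by rw [hadef]; linarith
  have hc4 : c - 4*a = φF + 8*φ2F := by rw [hcdef, hadef]; ring
  have hc : 0 < c := by
    have : c = (φF + 8*φ2F) + 4*a := by rw [hcdef, hadef]; ring
    linarith
  have hc4pos : 0 < c - 4*a := by rw [hc4]; exact hstab
  clear_value c a
  set M := (((Finset.Icc (-N+2) (-K+1)) ∪ (Finset.Icc (K+2) (N+1))).sup' hneCt
      (fun i => |D3 N ua i|)) with hMdef
  clear_value M
  have hMb : ∀ i : ℤ, ((-N+1 ≤ i ∧ i ≤ -K) ∨ (K+1 ≤ i ∧ i ≤ N)) →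
      |D3 N ua (i+1)| ≤ M := by
    intro i hi
    rw [hMdef]
    apply Finset.le_sup' (f := fun i => |D3 N ua i|)
    rw [Finset.mem_union, Finset.mem_Icc, Finset.mem_Icc]
    omega
  have hM0 : 0 ≤ M := by
    obtain ⟨i0, hi0⟩ := hneCt
    rw [hMdef]
    exact le_trans (abs_nonneg _) (Finset.le_sup' (f := fun i => |D3 N ua i|) hi0)
  set gg : ℤ → ℝ := fun i => -φ2F * (eps N)^2 * D3 N ua (i+1) with hggdef
  clear_value gg
  have hgb : ∀ i : ℤ, ((-N+1 ≤ i ∧ i ≤ -K) ∨ (K+1 ≤ i ∧ i ≤ N)) →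
      |gg i| ≤ a * (eps N)^2 * M := by
    intro i hi
    have h1 : gg i = a * (eps N)^2 * D3 N ua (i+1) := by rw [hggdef, hadef]
    rw [h1, abs_mul]
    have h2 : |a * (eps N)^2| = a * (eps N)^2 := abs_of_pos (by positivity)
    rw [h2]
    exact mul_le_mul_of_nonneg_left (hMb i hi) (by positivity)
  -- interior flux constancy
  set FF : ℤ → ℝ := fun i =>
      c * Dd N e i - a * (Dd N e (i+1) - 2*Dd N e i + Dd N e (i-1)) with hFFdef
  clear_value FF
  have heqI : ∀ j : ℤ, -K ≤ j → j ≤ K → FF j = FF (j+1) := by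
    intro j hj1 hj2
    have hm : j ∈ Finset.Icc (-N+1) (N-1) := by rw [Finset.mem_Icc]; omega
    have h1 := hua j hm
    have h2 := huq j hm
    unfold LqcfOp at h2
    rw [if_pos ⟨hj1, hj2⟩] at h2
    have h0 : Laop N φF φ2F e j = 0 := by
      unfold Laop at h1 h2 ⊢
      simp only [he]
      linear_combination h1 - h2
    simp only [hFFdef]
    exact qcfAux_flux N hepsne φF φ2F c a hcdef hadef e j h0
  have heqO : ∀ j : ℤ, ((-N+1 ≤ j ∧ j ≤ -K-1) ∨ (K+1 ≤ j ∧ j ≤ N-1)) →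
      c * Dd N e j - gg j = c * Dd N e (j+1) - gg (j+1) := by
    intro j hj
    have hm : j ∈ Finset.Icc (-N+1) (N-1) := by rw [Finset.mem_Icc]; omega
    have h1 := hua j hm
    have h2 := huq j hm
    unfold LqcfOp at h2
    rw [if_neg (by omega : ¬(-K ≤ j ∧ j ≤ K))] at h2
    have h3 : Laop N φF φ2F ua j = c * ((-uq (j+1) + 2 * uq j - uq (j-1)) / (eps N)^2) := by
      rw [h1, ← h2, hcdef]
    simp only [hggdef]
    exact qcfAux_outer N hepsne φF φ2F c hcdef ua uq e he j h3
  -- chain constancy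
  have hzL : ∀ i : ℤ, -N+1 ≤ i → i ≤ -K →
      c * Dd N e i - gg i = c * Dd N e (-K) - gg (-K) := by
    intro i h1 h2
    exact (qcfAux_const (fun i => c * Dd N e i - gg i) i (-K) (by omega)
      (fun j hj hj' => heqO j (Or.inl ⟨by omega, by omega⟩))).symm
  have hzR : ∀ i : ℤ, K+1 ≤ i → i ≤ N →
      c * Dd N e i - gg i = c * Dd N e (K+1) - gg (K+1) := by
    intro i h1 h2
    exact qcfAux_const (fun i => c * Dd N e i - gg i) (K+1) i h1
      (fun j hj hj' => heqO j (Or.inr ⟨hj, by omega⟩))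
  have hFB : ∀ i : ℤ, -K ≤ i → i ≤ K+1 → FF i = FF (-K) := by
    intro i h1 h2
    exact qcfAux_const FF (-K) i h1 (fun j hj hj' => heqI j hj (by omega))
  set q' : ℝ := 2*a*(eps N)^2*M with hqdef
  clear_value q'
  have hq0 : 0 ≤ q' := by rw [hqdef]; positivity
  have hqc0 : 0 ≤ q'/c := div_nonneg hq0 hc.le
  have hKN2 : K + 2 ≤ N := by omega
  -- one-step deviations across the chain next to the interface
  have hdevR : |Dd N e (K+2) - Dd N e (K+1)| ≤ q'/c := by
    have h1 := hzR (K+2) (by omega) (by omega)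
    have h2 : c * (Dd N e (K+2) - Dd N e (K+1)) = gg (K+2) - gg (K+1) := by
      linear_combination h1
    have h3 : |gg (K+2) - gg (K+1)| ≤ q' := by
      have b1 : |gg (K+2)| ≤ a * (eps N)^2 * M := hgb _ (Or.inr ⟨by omega, by omega⟩)
      have b2 : |gg (K+1)| ≤ a * (eps N)^2 * M := hgb _ (Or.inr ⟨by omega, by omega⟩)
      calc |gg (K+2) - gg (K+1)| ≤ |gg (K+2)| + |gg (K+1)| := abs_sub _ _
        _ ≤ q' := by rw [hqdef]; linarith
    rw [le_div_iff₀ hc]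
    calc |Dd N e (K+2) - Dd N e (K+1)| * c = |c * (Dd N e (K+2) - Dd N e (K+1))| := by
          rw [abs_mul, abs_of_pos hc]; ring
      _ = |gg (K+2) - gg (K+1)| := by rw [h2]
      _ ≤ q' := h3
  have hdevL : |Dd N e (-K-1) - Dd N e (-K)| ≤ q'/c := by
    have h1 := hzL (-K-1) (by omega) (by omega)
    have h2 : c * (Dd N e (-K-1) - Dd N e (-K)) = gg (-K-1) - gg (-K) := by
      linear_combination h1
    have h3 : |gg (-K-1) - gg (-K)| ≤ q' := by
      have b1 : |gg (-K-1)| ≤ a * (eps N)^2 * M := hgb _ (Or.inl ⟨by omega, by omega⟩)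
      have b2 : |gg (-K)| ≤ a * (eps N)^2 * M := hgb _ (Or.inl ⟨by omega, by omega⟩)
      calc |gg (-K-1) - gg (-K)| ≤ |gg (-K-1)| + |gg (-K)| := abs_sub _ _
        _ ≤ q' := by rw [hqdef]; linarith
    rw [le_div_iff₀ hc]
    calc |Dd N e (-K-1) - Dd N e (-K)| * c = |c * (Dd N e (-K-1) - Dd N e (-K))| := by
          rw [abs_mul, abs_of_pos hc]; ring
      _ = |gg (-K-1) - gg (-K)| := by rw [h2]
      _ ≤ q' := h3
  -- maximum principle (upper bound)
  have hub : ∀ i ∈ Finset.Icc (-K) (K+1), c * Dd N e i ≤ FF (-K) + 2*a*(q'/c) := by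
    obtain ⟨j0, hj0S, hj0max⟩ := Finset.exists_max_image (Finset.Icc (-K) (K+1)) (Dd N e)
      ⟨-K, by rw [Finset.mem_Icc]; omega⟩
    have hj0 := Finset.mem_Icc.mp hj0S
    suffices hs : c * Dd N e j0 ≤ FF (-K) + 2*a*(q'/c) by
      intro i hi
      have h1 : Dd N e i ≤ Dd N e j0 := hj0max i hi
      have h2 : c * Dd N e i ≤ c * Dd N e j0 := by
        exact mul_le_mul_of_nonneg_left h1 hc.le
      linarith
    have hnR : Dd N e (j0+1) ≤ Dd N e j0 + q'/c := by
      rcases le_or_gt (j0+1) (K+1) with h' | h'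
      · have := hj0max (j0+1) (Finset.mem_Icc.mpr ⟨by omega, h'⟩)
        linarith
      · have hj0e : j0 = K+1 := by omega
        rw [hj0e, show K+1+1 = K+2 by ring]
        have := (abs_le.mp hdevR).2
        linarith
    have hnL : Dd N e (j0-1) ≤ Dd N e j0 + q'/c := by
      rcases le_or_gt (-K) (j0-1) with h' | h'
      · have := hj0max (j0-1) (Finset.mem_Icc.mpr ⟨h', by omega⟩)
        linarith
      · have hj0e : j0 = -K := by omega
        rw [hj0e, show -K-1 = -K-1 by ring]
        have := (abs_le.mp hdevL).2
        linarith
    have hFFj0 : c * Dd N e j0 - a * (Dd N e (j0+1) - 2*Dd N e j0 + Dd N e (j0-1))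
        = FF (-K) := by
      rw [← hFB j0 hj0.1 hj0.2, hFFdef]
    have h4 : Dd N e (j0+1) + Dd N e (j0-1) - 2*Dd N e j0 ≤ 2*(q'/c) := by linarith
    have h5 := mul_le_mul_of_nonneg_left h4 ha.le
    linarith
  -- maximum principle (lower bound)
  have hlb : ∀ i ∈ Finset.Icc (-K) (K+1), FF (-K) - 2*a*(q'/c) ≤ c * Dd N e i := by
    obtain ⟨j0, hj0S, hj0min⟩ := Finset.exists_min_image (Finset.Icc (-K) (K+1)) (Dd N e)
      ⟨-K, by rw [Finset.mem_Icc]; omega⟩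
    have hj0 := Finset.mem_Icc.mp hj0S
    suffices hs : FF (-K) - 2*a*(q'/c) ≤ c * Dd N e j0 by
      intro i hi
      have h1 : Dd N e j0 ≤ Dd N e i := hj0min i hi
      have h2 : c * Dd N e j0 ≤ c * Dd N e i := mul_le_mul_of_nonneg_left h1 hc.le
      linarith
    have hnR : Dd N e j0 - q'/c ≤ Dd N e (j0+1) := by
      rcases le_or_gt (j0+1) (K+1) with h' | h'
      · have := hj0min (j0+1) (Finset.mem_Icc.mpr ⟨by omega, h'⟩)
        linarith
      · have hj0e : j0 = K+1 := by omega
        rw [hj0e, show K+1+1 = K+2 by ring]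
        have := (abs_le.mp hdevR).1
        linarith
    have hnL : Dd N e j0 - q'/c ≤ Dd N e (j0-1) := by
      rcases le_or_gt (-K) (j0-1) with h' | h'
      · have := hj0min (j0-1) (Finset.mem_Icc.mpr ⟨h', by omega⟩)
        linarith
      · have hj0e : j0 = -K := by omega
        rw [hj0e]
        have := (abs_le.mp hdevL).1
        linarith
    have hFFj0 : c * Dd N e j0 - a * (Dd N e (j0+1) - 2*Dd N e j0 + Dd N e (j0-1))
        = FF (-K) := by
      rw [← hFB j0 hj0.1 hj0.2, hFFdef]
    have h4 : -(2*(q'/c)) ≤ Dd N e (j0+1) + Dd N e (j0-1) - 2*Dd N e j0 := by linarith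
    have h5 := mul_le_mul_of_nonneg_left h4 ha.le
    linarith
  -- global deviation bound
  have hBub := hub (-K) (Finset.mem_Icc.mpr ⟨le_refl _, by omega⟩)
  have hBlb := hlb (-K) (Finset.mem_Icc.mpr ⟨le_refl _, by omega⟩)
  have hBub2 := hub (K+1) (Finset.mem_Icc.mpr ⟨by omega, le_refl _⟩)
  have hBlb2 := hlb (K+1) (Finset.mem_Icc.mpr ⟨by omega, le_refl _⟩)
  have hglob : ∀ j : ℤ, -N+1 ≤ j → j ≤ N → |c * Dd N e j - FF (-K)| ≤ 2*a*(q'/c) + q' := by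
    intro j h1 h2
    by_cases hcase : -K ≤ j ∧ j ≤ K+1
    · have h3 := hub j (Finset.mem_Icc.mpr ⟨hcase.1, hcase.2⟩)
      have h4 := hlb j (Finset.mem_Icc.mpr ⟨hcase.1, hcase.2⟩)
      rw [abs_le]
      exact ⟨by linarith, by linarith⟩
    · rcases (by omega : j ≤ -K-1 ∨ K+2 ≤ j) with hj | hj
      · have h5 := hzL j h1 (by omega)
        have e1 : c * Dd N e j - FF (-K)
            = (c * Dd N e (-K) - FF (-K)) + (gg j - gg (-K)) := by linear_combination h5
        have b0 : |c * Dd N e (-K) - FF (-K)| ≤ 2*a*(q'/c) := by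
          rw [abs_le]; exact ⟨by linarith, by linarith⟩
        have b1 : |gg j| ≤ a*(eps N)^2*M := hgb _ (Or.inl ⟨h1, by omega⟩)
        have b2 : |gg (-K)| ≤ a*(eps N)^2*M := hgb _ (Or.inl ⟨by omega, by omega⟩)
        calc |c * Dd N e j - FF (-K)|
            = |(c * Dd N e (-K) - FF (-K)) + (gg j - gg (-K))| := by rw [e1]
          _ ≤ |c * Dd N e (-K) - FF (-K)| + |gg j - gg (-K)| := abs_add_le _ _
          _ ≤ |c * Dd N e (-K) - FF (-K)| + (|gg j| + |gg (-K)|) := by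
              have := abs_sub (gg j) (gg (-K)); linarith
          _ ≤ 2*a*(q'/c) + q' := by
              have hq2 : a*(eps N)^2*M = q'/2 := by rw [hqdef]; ring
              linarith
      · have h5 := hzR j (by omega) h2
        have e1 : c * Dd N e j - FF (-K)
            = (c * Dd N e (K+1) - FF (-K)) + (gg j - gg (K+1)) := by linear_combination h5
        have b0 : |c * Dd N e (K+1) - FF (-K)| ≤ 2*a*(q'/c) := by
          rw [abs_le]; exact ⟨by linarith, by linarith⟩
        have b1 : |gg j| ≤ a*(eps N)^2*M := hgb _ (Or.inr ⟨by omega, h2⟩)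
        have b2 : |gg (K+1)| ≤ a*(eps N)^2*M := hgb _ (Or.inr ⟨by omega, by omega⟩)
        calc |c * Dd N e j - FF (-K)|
            = |(c * Dd N e (K+1) - FF (-K)) + (gg j - gg (K+1))| := by rw [e1]
          _ ≤ |c * Dd N e (K+1) - FF (-K)| + |gg j - gg (K+1)| := abs_add_le _ _
          _ ≤ |c * Dd N e (K+1) - FF (-K)| + (|gg j| + |gg (K+1)|) := by
              have := abs_sub (gg j) (gg (K+1)); linarith
          _ ≤ 2*a*(q'/c) + q' := by
              have hq2 : a*(eps N)^2*M = q'/2 := by rw [hqdef]; ring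
              linarith
  -- mean-zero
  have hsum : ∑ j ∈ Finset.Icc (-N+1) N, Dd N e j = 0 := by
    have ht := qcfAux_tele e (-N) N (by omega)
    have h0 : e N - e (-N) = 0 := by rw [he, he, hbcL, hbcR]; ring
    unfold Dd
    rw [← Finset.sum_div, ht, h0, zero_div]
  have hcard : (((Finset.Icc (-N+1 : ℤ) N).card : ℕ) : ℝ) = 2*(N:ℝ) := by
    rw [Int.card_Icc, show N + 1 - (-N+1) = 2*N by ring]
    have h1 : (((2*N).toNat : ℤ) : ℝ) = ((2*N : ℤ) : ℝ) := by
      rw [Int.toNat_of_nonneg (by omega : (0:ℤ) ≤ 2*N)]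
    push_cast at h1 ⊢
    linarith
  have hBbound : |FF (-K)| ≤ 2*a*(q'/c) + q' := by
    have h1 : (2*(N:ℝ)) * FF (-K) = ∑ j ∈ Finset.Icc (-N+1) N, (FF (-K) - c * Dd N e j) := by
      rw [Finset.sum_sub_distrib, Finset.sum_const, ← Finset.mul_sum, hsum, mul_zero,
        sub_zero, nsmul_eq_mul, hcard]
    have h2 : |(2*(N:ℝ)) * FF (-K)| ≤ (2*(N:ℝ)) * (2*a*(q'/c) + q') := by
      rw [h1]
      calc |∑ j ∈ Finset.Icc (-N+1) N, (FF (-K) - c * Dd N e j)|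
          ≤ ∑ j ∈ Finset.Icc (-N+1) N, |FF (-K) - c * Dd N e j| :=
            Finset.abs_sum_le_sum_abs _ _
        _ ≤ ∑ _j ∈ Finset.Icc (-N+1) N, (2*a*(q'/c) + q') := by
            refine Finset.sum_le_sum (fun j hj => ?_)
            have hj' := Finset.mem_Icc.mp hj
            rw [abs_sub_comm]
            exact hglob j hj'.1 hj'.2
        _ = (2*(N:ℝ)) * (2*a*(q'/c) + q') := by
            rw [Finset.sum_const, nsmul_eq_mul, hcard]
    have h3 : (0:ℝ) < 2*(N:ℝ) := by linarith
    rw [abs_mul, abs_of_pos h3] at h2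
    exact le_of_mul_le_mul_left h2 h3
  -- conclusion
  intro j hj
  rw [Finset.mem_Icc] at hj
  have h1 := hglob j hj.1 hj.2
  have h2 : |c * Dd N e j| ≤ 2*(2*a*(q'/c) + q') := by
    calc |c * Dd N e j| = |(c * Dd N e j - FF (-K)) + FF (-K)| := by ring_nf
      _ ≤ |c * Dd N e j - FF (-K)| + |FF (-K)| := abs_add_le _ _
      _ ≤ 2*(2*a*(q'/c) + q') := by linarith
  rw [abs_mul, abs_of_pos hc] at h2
  have h3 : |Dd N e j| ≤ (2*q'*(2*a+c))/c^2 := by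
    rw [le_div_iff₀ (by positivity : (0:ℝ) < c^2)]
    have hexp : (2*(2*a*(q'/c) + q'))*c = 2*q'*(2*a+c) := by
      field_simp
    nlinarith [h2, mul_le_mul_of_nonneg_right h2 hc.le]
  have habs : |φ2F| = a := by rw [hadef, abs_of_neg h2F]
  refine le_trans h3 ?_
  rw [habs, ← hc4, hqdef]
  rw [div_le_div_iff₀ (by positivity : (0:ℝ) < c^2) hc4pos]
  nlinarith [mul_nonneg (mul_nonneg (mul_nonneg (mul_nonneg ha.le ha.le) (sq_nonneg (eps N))) hM0) hc.le,
    mul_nonneg (mul_nonneg (mul_nonneg (mul_nonneg ha.le ha.le) (sq_nonneg (eps N))) hM0) ha.le]
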